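/- Conversely, if f and h are differentiable on an open convex set S and |f(x) − f(y) − ⟨∇f(y), x − y⟩| ≤ L · D_h(x,y) for all x, y ∈ S, then L·h − f and L·h + f are convex on S. -/
import Mathlib


local notation "⟪" x ", " y "⟫" => @inner ℝ _ _ x y

/-- A function admitting a "subgradient" on a convex set is convex there. -/
lemma convexOn_of_subgradient {E : Type*} [NormedAddCommGroup E] [InnerProductSpace ℝ E]
    {S : Set E} (hS : Convex ℝ S) (g : E → ℝ) (g' : E → E)
    (hg : ∀ x ∈ S, ∀ y ∈ S, g y + ⟪g' y, x - y⟫ ≤ g x) : ConvexOn ℝ S g := by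
  refine ⟨hS, fun x hx y hy a b ha hb hab => ?_⟩
  set z := a • x + b • y with hzdef
  have hz : z ∈ S := hS hx hy ha hb hab
  have h1 := hg x hx z hz
  have h2 := hg y hy z hz
  have key : a * (g z + ⟪g' z, x - z⟫) + b * (g z + ⟪g' z, y - z⟫) = g z := by
    have hsum : a • (x - z) + b • (y - z) = (0 : E) := by
      have e : a • (x - z) + b • (y - z) = (a • x + b • y) - (a + b) • z := by module
      rw [e, hab, one_smul, hzdef, sub_self]
    have : a * ⟪g' z, x - z⟫ + b * ⟪g' z, y - z⟫ = (0 : ℝ) := by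
      rw [← real_inner_smul_right, ← real_inner_smul_right, ← inner_add_right, hsum,
        inner_zero_right]
    linear_combination this + g z * hab
  calc g (a • x + b • y) = g z := rfl
    _ = a * (g z + ⟪g' z, x - z⟫) + b * (g z + ⟪g' z, y - z⟫) := key.symm
    _ ≤ a * g x + b * g y := by
        have t1 := mul_le_mul_of_nonneg_left h1 ha
        have t2 := mul_le_mul_of_nonneg_left h2 hb
        linarith

/-- The descent-type inequality implies the convexity of `L·h − f` and `L·h + f`. -/
theorem descent_inequality_lsmad {d : ℕ} (S : Set (EuclideanSpace ℝ (Fin d)))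
    (hS_open : IsOpen S) (hS_conv : Convex ℝ S) (L : ℝ) (hL : 0 < L)
    (f h : EuclideanSpace ℝ (Fin d) → ℝ)
    (f' h' : EuclideanSpace ℝ (Fin d) → EuclideanSpace ℝ (Fin d))
    (hf_diff : ∀ y ∈ S, HasGradientAt f (f' y) y)
    (hh_diff : ∀ y ∈ S, HasGradientAt h (h' y) y)
    (hineq : ∀ x ∈ S, ∀ y ∈ S,
      |f x - f y - ⟪f' y, x - y⟫| ≤ L * (h x - h y - ⟪h' y, x - y⟫)) :
    ConvexOn ℝ S (fun u => L * h u - f u) ∧ ConvexOn ℝ S (fun u => L * h u + f u) := by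
  constructor
  · apply convexOn_of_subgradient hS_conv _ (fun u => L • h' u - f' u)
    intro x hx y hy
    have habs := hineq x hx y hy
    have h1 : f x - f y - ⟪f' y, x - y⟫ ≤ L * (h x - h y - ⟪h' y, x - y⟫) :=
      le_trans (le_abs_self _) habs
    have hip : ⟪L • h' y - f' y, x - y⟫ = L * ⟪h' y, x - y⟫ - ⟪f' y, x - y⟫ := by
      rw [inner_sub_left, real_inner_smul_left]
    rw [hip]; linarith
  · apply convexOn_of_subgradient hS_conv _ (fun u => L • h' u + f' u)
    intro x hx y hy
    have habs := hineq x hx y hy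
    have h1 : -(f x - f y - ⟪f' y, x - y⟫) ≤ L * (h x - h y - ⟪h' y, x - y⟫) :=
      le_trans (neg_le_abs _) habs
    have hip : ⟪L • h' y + f' y, x - y⟫ = L * ⟪h' y, x - y⟫ + ⟪f' y, x - y⟫ := by
      rw [inner_add_left, real_inner_smul_left]
    rw [hip]; linarith
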